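/- If W ≤ exp(θ/ρ)·(1+z₁)·(1+z₂+z₁·z₂), then τ_h is strictly monotonically decreasing on the interval [exp(−θ/ξ), ∞): for all λ, λ' with exp(−θ/ξ) ≤ λ < λ', one has τ_h(λ') < τ_h(λ). -/

import Mathlib

open Real

/-- with `z₁ = θ·γ_SB/ρ`, `z₂ = θ·γ_UD/ξ` and
`τ_h(λ) = λ / ((1+z₂+z₁z₂)·e^{θ/ρ}·e^{(θ/ξ)(z₁+1)}·λ^{z₁+1} + z₁W/(1+z₁))`,
if `W ≤ e^{θ/ρ}·(1+z₁)·(1+z₂+z₁z₂)` then `τ_h` is strictly decreasing on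
`[e^{−θ/ξ}, ∞)`. -/
theorem stmt16 (θ ρ ξ γSB γUD W : ℝ)
    (hθ : 0 < θ) (hρ : 0 < ρ) (hξ : 0 < ξ) (hγSB : 0 < γSB) (hγUD : 0 < γUD) (hW : 0 < W)
    (z₁ z₂ : ℝ) (hz₁ : z₁ = θ * γSB / ρ) (hz₂ : z₂ = θ * γUD / ξ)
    (τh : ℝ → ℝ)
    (hτh : ∀ lam : ℝ, τh lam = lam /
      ((1 + z₂ + z₁ * z₂) * Real.exp (θ / ρ) * Real.exp ((θ / ξ) * (z₁ + 1)) *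
          lam ^ (z₁ + 1) + z₁ * W / (1 + z₁)))
    (hWsmall : W ≤ Real.exp (θ / ρ) * (1 + z₁) * (1 + z₂ + z₁ * z₂)) :
    ∀ lam lam' : ℝ, Real.exp (-θ / ξ) ≤ lam → lam < lam' → τh lam' < τh lam := by
  have hz₁0 : 0 < z₁ := by rw [hz₁]; positivity
  have hz₂0 : 0 < z₂ := by rw [hz₂]; positivity
  set p : ℝ := z₁ + 1 with hp
  set A : ℝ := (1 + z₂ + z₁ * z₂) * Real.exp (θ / ρ) * Real.exp ((θ / ξ) * (z₁ + 1)) with hA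
  set B : ℝ := z₁ * W / (1 + z₁) with hB
  have hA0 : 0 < A := by
    have h1 : (0:ℝ) < 1 + z₂ + z₁ * z₂ := by positivity
    positivity
  have hB0 : 0 < B := by positivity
  set lam0 : ℝ := Real.exp (-θ / ξ) with hlam0
  have hlam00 : 0 < lam0 := Real.exp_pos _
  -- lam0 ^ p value
  have hlam0p : lam0 ^ p = Real.exp ((-θ / ξ) * p) := by
    rw [hlam0, Real.rpow_def_of_pos (Real.exp_pos _), Real.log_exp]
  have hAlam0 : A * lam0 ^ p = (1 + z₂ + z₁ * z₂) * Real.exp (θ / ρ) := by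
    rw [hlam0p, hA, hp]
    have : Real.exp ((θ / ξ) * (z₁ + 1)) * Real.exp ((-θ / ξ) * (z₁ + 1)) = 1 := by
      rw [← Real.exp_add]
      ring_nf
      exact Real.exp_zero
    calc (1 + z₂ + z₁ * z₂) * Real.exp (θ / ρ) * Real.exp ((θ / ξ) * (z₁ + 1)) *
          Real.exp ((-θ / ξ) * (z₁ + 1))
        = (1 + z₂ + z₁ * z₂) * Real.exp (θ / ρ) *
            (Real.exp ((θ / ξ) * (z₁ + 1)) * Real.exp ((-θ / ξ) * (z₁ + 1))) := by ring
      _ = (1 + z₂ + z₁ * z₂) * Real.exp (θ / ρ) := by rw [this, mul_one]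
  have hkey : B ≤ z₁ * (A * lam0 ^ p) := by
    rw [hAlam0, hB]
    rw [div_le_iff₀ (by positivity : (0:ℝ) < 1 + z₁)]
    nlinarith [hz₁0.le, Real.exp_pos (θ / ρ)]
  -- rewrite τh as a function
  have hfun : τh = fun lam : ℝ => lam / (A * lam ^ p + B) := by
    funext lam; rw [hτh lam]
  -- derivative of τh at x > 0
  have hderiv : ∀ x : ℝ, 0 < x →
      HasDerivAt τh ((B - z₁ * (A * x ^ p)) / (A * x ^ p + B) ^ 2) x := by
    intro x hx
    have hD0 : 0 < A * x ^ p + B := by positivity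
    have hpow : HasDerivAt (fun y : ℝ => y ^ p) (p * x ^ (p - 1)) x :=
      Real.hasDerivAt_rpow_const (Or.inl hx.ne')
    have hDen : HasDerivAt (fun y : ℝ => A * y ^ p + B) (A * (p * x ^ (p - 1))) x :=
      ((hpow.const_mul A).add_const B)
    have h := (hasDerivAt_id x).div hDen hD0.ne'
    rw [hfun]
    convert h using 1
    · rfl
    · rfl
    · rfl
    have hx1 : x ^ (p - 1) * x = x ^ p := by
      rw [← Real.rpow_add_one hx.ne' (p - 1)]; ring_nf
    simp only [id]
    have h2 : x * (A * (p * x ^ (p - 1))) = A * p * x ^ p := by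
      rw [← hx1]; ring
    rw [h2, hp]; ring
  -- strict anti on Ici lam0
  have hanti : StrictAntiOn τh (Set.Ici lam0) := by
    apply strictAntiOn_of_deriv_neg (convex_Ici lam0)
    · intro x hx
      exact ((hderiv x (lt_of_lt_of_le hlam00 hx)).continuousAt).continuousWithinAt
    · intro x hx
      rw [interior_Ici] at hx
      have hxpos : 0 < x := lt_trans hlam00 hx
      rw [(hderiv x hxpos).deriv]
      apply div_neg_of_neg_of_pos
      · have hlt : lam0 ^ p < x ^ p :=
          Real.rpow_lt_rpow hlam00.le hx (by positivity)
        have := mul_lt_mul_of_pos_left (mul_lt_mul_of_pos_left hlt hA0) hz₁0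
        linarith
      · positivity
  intro lam lam' hlam hlt
  exact hanti hlam (le_trans hlam (le_of_lt hlt)) hlt
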